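/- arXiv:1612.09100 — 3 statements merged into one kernel-verified Lean document; each statement's English description precedes it below -/
import Mathlib

section
/- Let A be a complex Banach algebra and let X, Y ∈ A satisfy X*Y − Y*X = s • Y for some constant s ∈ ℂ with s ≠ 0. Let α, β ∈ ℂ be such that Complex.exp (−α * s) ≠ 1. Then exp(α • X) * exp(β • Y) = exp(α • X + ((α * s / (1 − Complex.exp (−α * s))) * β) • Y). -/
open NormedSpace Nat

section Aux

variable {A : Type*} [NormedRing A] [NormedAlgebra ℂ A] [CompleteSpace A]

private lemma semiconj_exp (a b c : A) (h : a * b = c * a) :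
    a * exp b = exp c * a := by
  have hn : ∀ n : ℕ, a * b ^ n = c ^ n * a := fun n => (SemiconjBy.pow_right h n)
  have hs1 : Summable (fun n : ℕ => ((n ! : ℂ))⁻¹ • b ^ n) := expSeries_summable' b
  have hs2 : Summable (fun n : ℕ => ((n ! : ℂ))⁻¹ • c ^ n) := expSeries_summable' c
  calc a * exp b = a * ∑' n : ℕ, ((n ! : ℂ))⁻¹ • b ^ n := by rw [exp_eq_tsum ℂ]
    _ = ∑' n : ℕ, a * (((n ! : ℂ))⁻¹ • b ^ n) := (hs1.tsum_mul_left a).symm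
    _ = ∑' n : ℕ, (((n ! : ℂ))⁻¹ • c ^ n) * a := by
        refine tsum_congr fun n => ?_
        rw [mul_smul_comm, hn n, smul_mul_assoc]
    _ = (∑' n : ℕ, ((n ! : ℂ))⁻¹ • c ^ n) * a := hs2.tsum_mul_right a
    _ = exp c * a := by rw [exp_eq_tsum ℂ]

private lemma exp_Y_mul_X (X Y : A) (s l : ℂ) (h : X * Y - Y * X = s • Y) :
    exp (l • Y) * X = (X - (l * s) • Y) * exp (l • Y) := by
  have hYX : Y * X = X * Y - s • Y := by rw [← h]; abel
  set v := l • Y with hv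
  have hvX : v * X = X * v - s • v := by
    simp only [hv, smul_mul_assoc, mul_smul_comm, hYX, smul_sub, smul_smul]
    rw [mul_comm l s]
  have hpow : ∀ n : ℕ, v ^ n * X = X * v ^ n - ((n : ℂ) * s) • v ^ n := by
    intro n
    induction n with
    | zero => simp
    | succ n ih =>
      have h1 : v ^ (n + 1) * X = v * (v ^ n * X) := by rw [_root_.pow_succ', mul_assoc]
      have h2 : v * (X * v ^ n) = X * v ^ (n + 1) - s • v ^ (n + 1) := by
        rw [← mul_assoc, hvX, sub_mul, smul_mul_assoc, mul_assoc, ← _root_.pow_succ']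
      rw [h1, ih, mul_sub, h2, mul_smul_comm, ← _root_.pow_succ']
      push_cast
      rw [add_mul, one_mul, add_smul]
      abel
  have hs0 : Summable (fun n : ℕ => ((n ! : ℂ))⁻¹ • v ^ n) := expSeries_summable' v
  have hsX : Summable (fun n : ℕ => X * (((n ! : ℂ))⁻¹ • v ^ n)) := hs0.mul_left X
  set g : ℕ → A := fun n => (((n : ℂ)) * ((n ! : ℂ))⁻¹ * s) • v ^ n with hg
  have hg_succ : ∀ n : ℕ, g (n + 1) = s • (v * (((n ! : ℂ))⁻¹ • v ^ n)) := by
    intro n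
    have h2 : (n ! : ℂ) ≠ 0 := by exact_mod_cast Nat.factorial_ne_zero n
    have h1 : ((n : ℂ) + 1) ≠ 0 := Nat.cast_add_one_ne_zero n
    have hfac : (((n : ℕ) + 1 : ℕ) : ℂ) * (((n + 1)! : ℂ))⁻¹ = ((n ! : ℂ))⁻¹ := by
      rw [Nat.factorial_succ]
      push_cast
      field_simp
    simp only [hg]
    rw [hfac, mul_smul_comm, smul_smul, ← _root_.pow_succ', mul_comm]
  have hg1 : Summable (fun n : ℕ => g (n + 1)) := by
    have hsum : Summable (fun n : ℕ => s • (v * (((n ! : ℂ))⁻¹ • v ^ n))) :=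
      (hs0.mul_left v).const_smul s
    exact hsum.congr fun n => (hg_succ n).symm
  have hgsum : Summable g := (summable_nat_add_iff 1).mp hg1
  have hgval : ∑' n, g n = s • (v * exp v) := by
    rw [hgsum.tsum_eq_zero_add]
    have h0 : g 0 = 0 := by simp [hg]
    rw [h0, zero_add]
    calc ∑' n : ℕ, g (n + 1) = ∑' n : ℕ, s • (v * (((n ! : ℂ))⁻¹ • v ^ n)) :=
          tsum_congr hg_succ
      _ = s • (v * ∑' n : ℕ, ((n ! : ℂ))⁻¹ • v ^ n) := by
          rw [(hs0.mul_left v).tsum_const_smul s, hs0.tsum_mul_left v]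
      _ = s • (v * exp v) := by rw [exp_eq_tsum ℂ]
  have key : exp v * X = X * exp v - s • (v * exp v) := by
    calc exp v * X = (∑' n : ℕ, ((n ! : ℂ))⁻¹ • v ^ n) * X := by rw [exp_eq_tsum ℂ]
      _ = ∑' n : ℕ, (((n ! : ℂ))⁻¹ • v ^ n) * X := (hs0.tsum_mul_right X).symm
      _ = ∑' n : ℕ, (X * (((n ! : ℂ))⁻¹ • v ^ n) - g n) := by
          refine tsum_congr fun n => ?_
          rw [smul_mul_assoc, hpow n]
          simp only [hg]
          rw [smul_sub, mul_smul_comm, smul_smul,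
            show ((n ! : ℂ))⁻¹ * ((n : ℂ) * s) = (n : ℂ) * ((n ! : ℂ))⁻¹ * s from by ring]
      _ = (∑' n : ℕ, X * (((n ! : ℂ))⁻¹ • v ^ n)) - ∑' n, g n := hsX.tsum_sub hgsum
      _ = X * exp v - s • (v * exp v) := by
          rw [hgval, hs0.tsum_mul_left X, exp_eq_tsum ℂ]
  rw [key, hv, sub_mul, smul_mul_assoc, smul_mul_assoc, smul_smul, mul_comm s l]

private lemma exp_smul_one' (c : ℂ) : exp (c • (1 : A)) = Complex.exp c • (1 : A) := by
  rw [← Algebra.algebraMap_eq_smul_one, ← algebraMap_exp_comm, Complex.exp_eq_exp_ℂ,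
    Algebra.algebraMap_eq_smul_one]

private lemma exp_X_mul_exp_Y (X Y : A) (s : ℂ) (h : X * Y - Y * X = s • Y) (γ μ : ℂ) :
    exp (γ • X) * exp (μ • Y) = exp ((Complex.exp (γ * s) * μ) • Y) * exp (γ • X) := by
  let +nondep : NormedAlgebra ℚ A := .restrictScalars ℚ ℂ A
  have hXY' : X * Y = Y * X + s • Y := by rw [← h]; abel
  have hsemi : Y * (γ • X + (γ * s) • (1 : A)) = (γ • X) * Y := by
    rw [mul_add, mul_smul_comm, mul_smul_comm, mul_one, smul_mul_assoc, hXY', smul_add,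
      smul_smul]
  have h1 : Y * exp (γ • X + (γ * s) • (1 : A)) = exp (γ • X) * Y :=
    semiconj_exp _ _ _ hsemi
  have hcomm : Commute (γ • X) ((γ * s) • (1 : A)) :=
    ((Commute.one_right X).smul_left γ).smul_right (γ * s)
  rw [exp_add_of_commute hcomm, exp_smul_one', mul_smul_comm, mul_one] at h1
  have hXY : exp (γ • X) * Y = (Complex.exp (γ * s) • Y) * exp (γ • X) := by
    rw [← h1, mul_smul_comm, smul_mul_assoc]
  have hsemi2 : exp (γ • X) * (μ • Y) = ((Complex.exp (γ * s) * μ) • Y) * exp (γ • X) := by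
    rw [mul_smul_comm, hXY, smul_mul_assoc, smul_mul_assoc, smul_smul, mul_comm μ]
  exact semiconj_exp _ _ _ hsemi2

end Aux

/-- Second BCH-type formula of Lemma 5.7: in a complex Banach algebra, if
`X * Y - Y * X = s • Y` with `s ≠ 0`, and `e^{-αs} ≠ 1`, then
`exp(α • X) * exp(β • Y) = exp(α • X + (αs/(1 - e^{-αs})) β • Y)`. -/
theorem bch_product {A : Type*} [NormedRing A] [NormedAlgebra ℂ A] [CompleteSpace A]
    (X Y : A) (s : ℂ) (h : X * Y - Y * X = s • Y) (hs : s ≠ 0) (α β : ℂ)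
    (hα : Complex.exp (-α * s) ≠ 1) :
    NormedSpace.exp (α • X) * NormedSpace.exp (β • Y) =
      NormedSpace.exp (α • X + ((α * s / (1 - Complex.exp (-α * s))) * β) • Y) := by
  let +nondep : NormedAlgebra ℚ A := .restrictScalars ℚ ℂ A
  set E := Complex.exp (-α * s) with hE
  have hE1 : E - 1 ≠ 0 := sub_ne_zero.mpr hα
  have h1E : (1 : ℂ) - E ≠ 0 := fun hcon => hE1 (by linear_combination -hcon)
  set l : ℂ := β / (E - 1) with hl
  set c : ℂ := α * s / (1 - E) * β with hc
  -- semiconjugation: exp(l•Y) * (α•X) = (α•X + c•Y) * exp(l•Y)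
  have hcl : c = -(α * (l * s)) := by
    rw [hc, hl]
    field_simp
    ring
  have hA : exp (l • Y) * (α • X) = (α • X + c • Y) * exp (l • Y) := by
    rw [mul_smul_comm, exp_Y_mul_X X Y s l h, ← smul_mul_assoc, smul_sub, smul_smul, hcl,
      neg_smul, sub_eq_add_neg]
  have hconj : exp (l • Y) * exp (α • X) = exp (α • X + c • Y) * exp (l • Y) :=
    semiconj_exp _ _ _ hA
  -- cancellation facts
  have commY : ∀ a b : ℂ, Commute (a • Y) (b • Y) := fun a b =>
    ((Commute.refl Y).smul_left a).smul_right b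
  have commX : ∀ a b : ℂ, Commute (a • X) (b • X) := fun a b =>
    ((Commute.refl X).smul_left a).smul_right b
  have hPP' : exp (l • Y) * exp ((-l) • Y) = 1 := by
    rw [← exp_add_of_commute (commY l (-l)), ← add_smul, add_neg_cancel, zero_smul, exp_zero]
  have hXX' : exp (α • X) * exp ((-α) • X) = 1 := by
    rw [← exp_add_of_commute (commX α (-α)), ← add_smul, add_neg_cancel, zero_smul, exp_zero]
  have hX'X : exp ((-α) • X) * exp (α • X) = 1 := by
    rw [← exp_add_of_commute (commX (-α) α), ← add_smul, neg_add_cancel, zero_smul, exp_zero]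
  -- commute exp((-α)•X) past exp(l•Y)
  have e1 : exp ((-α) • X) * exp (l • Y) = exp ((E * l) • Y) * exp ((-α) • X) := by
    have := exp_X_mul_exp_Y X Y s h (-α) l
    rwa [neg_mul, ← neg_mul, ← hE] at this
  have e2 : exp (l • Y) = exp (α • X) * (exp ((E * l) • Y) * exp ((-α) • X)) := by
    rw [← e1, ← mul_assoc, hXX', one_mul]
  have hβ : E * l + -l = β := by
    rw [hl]
    field_simp
    ring
  symm
  calc exp (α • X + c • Y)
      = exp (α • X + c • Y) * (exp (l • Y) * exp ((-l) • Y)) := by rw [hPP', mul_one]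
    _ = (exp (α • X + c • Y) * exp (l • Y)) * exp ((-l) • Y) := by rw [mul_assoc]
    _ = (exp (l • Y) * exp (α • X)) * exp ((-l) • Y) := by rw [hconj]
    _ = exp (α • X) * (exp ((E * l) • Y) * (exp ((-α) • X) * exp (α • X))
          * exp ((-l) • Y)) := by rw [e2]; simp only [mul_assoc]
    _ = exp (α • X) * (exp ((E * l) • Y) * exp ((-l) • Y)) := by rw [hX'X, mul_one]
    _ = exp (α • X) * exp ((E * l + -l) • Y) := by
          rw [← exp_add_of_commute (commY (E * l) (-l)), ← add_smul]
    _ = exp (α • X) * exp (β • Y) := by rw [hβ]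
end

section
/- Let A be a complex Banach algebra and let X, Y ∈ A satisfy X*Y − Y*X = s • Y for some constant s ∈ ℂ. Then for all α, β ∈ ℂ one has exp(α • X) * exp(β • Y) * exp(−α • X) = exp((β * Complex.exp (α * s)) • Y). -/
open NormedSpace

lemma bch_exp_tsum {A : Type*} [NormedRing A] [NormedAlgebra ℂ A] (z : A) :
    exp z = ∑' n : ℕ, (n.factorial : ℂ)⁻¹ • z ^ n := by
  rw [exp_eq_tsum ℂ]

lemma bch_aux_pow {A : Type*} [Ring A] [Algebra ℂ A] (X Y : A) (s : ℂ)
    (h : X * Y - Y * X = s • Y) (n : ℕ) :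
    X ^ n * Y = Y * (X + s • 1) ^ n := by
  have hXY : X * Y = Y * (X + s • 1) := by
    rw [mul_add, mul_smul_comm, mul_one, sub_eq_iff_eq_add.mp h, add_comm]
  induction n with
  | zero => simp
  | succ n ih =>
    rw [pow_succ, pow_succ, mul_assoc, hXY, ← mul_assoc, ih, mul_assoc]

lemma bch_key1 {A : Type*} [NormedRing A] [NormedAlgebra ℂ A] [CompleteSpace A]
    (X Y : A) (s : ℂ) (h : X * Y - Y * X = s • Y) (α : ℂ) :
    exp (α • X) * Y = Complex.exp (α * s) • (Y * exp (α • X)) := by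
  have h1 : exp (α • X) * Y = Y * exp (α • (X + s • 1)) := by
    rw [bch_exp_tsum (α • X), bch_exp_tsum (α • (X + s • 1)),
      ← (expSeries_summable' (𝕂 := ℂ) (α • X)).tsum_mul_right Y,
      ← (expSeries_summable' (𝕂 := ℂ) (α • (X + s • 1))).tsum_mul_left Y]
    congr 1
    funext n
    simp only [smul_pow, smul_mul_assoc, mul_smul_comm, bch_aux_pow X Y s h n]
  have h2 : exp (α • (X + s • 1)) = Complex.exp (α * s) • exp (α • X) := by
    letI : NormedAlgebra ℚ A := NormedAlgebra.restrictScalars ℚ ℂ A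
    have hc : Commute (α • X) ((α * s) • (1 : A)) :=
      ((Commute.one_right (α • X)).smul_right _)
    have he : α • (X + s • 1) = α • X + (α * s) • (1 : A) := by
      rw [smul_add, smul_smul]
    rw [he, exp_add_of_commute hc]
    have h3 : exp ((α * s) • (1 : A)) = Complex.exp (α * s) • (1 : A) := by
      rw [← Algebra.algebraMap_eq_smul_one, ← Algebra.algebraMap_eq_smul_one,
        ← map_exp (algebraMap ℂ A) (continuous_algebraMap ℂ A) (α * s),
        Complex.exp_eq_exp_ℂ]
    rw [h3, mul_smul_comm, mul_one]
  rw [h1, h2, mul_smul_comm]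

lemma bch_key2 {A : Type*} [NormedRing A] [NormedAlgebra ℂ A] [CompleteSpace A]
    (X Y : A) (s : ℂ) (h : X * Y - Y * X = s • Y) (α : ℂ) (n : ℕ) :
    exp (α • X) * Y ^ n = (Complex.exp (α * s)) ^ n • (Y ^ n * exp (α • X)) := by
  induction n with
  | zero => simp
  | succ n ih =>
    rw [pow_succ, ← mul_assoc, ih, smul_mul_assoc, mul_assoc, bch_key1 X Y s h α,
      mul_smul_comm, smul_smul, pow_succ, ← mul_assoc]

/-- Third BCH-type formula of Lemma 5.7: in a complex Banach algebra, if
`X * Y - Y * X = s • Y` then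
`exp(α • X) * exp(β • Y) * exp(-α • X) = exp((β e^{αs}) • Y)`. -/
theorem bch_exp_conjugation {A : Type*} [NormedRing A] [NormedAlgebra ℂ A] [CompleteSpace A]
    (X Y : A) (s : ℂ) (h : X * Y - Y * X = s • Y) (α β : ℂ) :
    NormedSpace.exp (α • X) * NormedSpace.exp (β • Y) * NormedSpace.exp (-α • X) =
      NormedSpace.exp ((β * Complex.exp (α * s)) • Y) := by
  have key3 : exp (α • X) * exp (β • Y)
      = exp ((β * Complex.exp (α * s)) • Y) * exp (α • X) := by
    rw [bch_exp_tsum (β • Y), bch_exp_tsum ((β * Complex.exp (α * s)) • Y),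
      ← (expSeries_summable' (𝕂 := ℂ) (β • Y)).tsum_mul_left (exp (α • X)),
      ← (expSeries_summable' (𝕂 := ℂ) ((β * Complex.exp (α * s)) • Y)).tsum_mul_right
        (exp (α • X))]
    congr 1
    funext n
    rw [mul_smul_comm, smul_pow, mul_smul_comm, bch_key2 X Y s h α n]
    simp only [smul_pow, smul_mul_assoc, smul_smul, mul_pow]
  have hinv : exp (α • X) * exp (-α • X) = 1 := by
    letI : NormedAlgebra ℚ A := NormedAlgebra.restrictScalars ℚ ℂ A
    rw [neg_smul, ← exp_add_of_commute ((Commute.refl (α • X)).neg_right),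
      add_neg_cancel, exp_zero]
  rw [key3, mul_assoc, hinv, mul_one]
end

section
/- Let U be a complex Banach space and let X, Y be bounded linear operators on U satisfying the commutation relation X ∘ Y − Y ∘ X = Y, and assume moreover exp((2·π·Complex.I) • X) = 1 (this holds in the paper's applications, where X has integer spectrum). For a matrix A = (a, b; c, d) ∈ SL₂(ℤ) and τ in the upper half-plane ℍ write A·τ = (aτ+b)/(cτ+d), and define (cτ+d)^X := exp((Complex.log (c*τ+d)) • X) using the principal branch of the complex logarithm (note cτ+d ≠ 0 for τ ∈ ℍ). On functions φ : ℍ × ℂ × U → ℂ define [φ · A](τ, z, u) = φ( A·τ , z/(cτ+d) , (cτ+d)^X ( exp( (−(c*z)/(cτ+d)) • Y ) u ) ). Then this defines a right action of SL₂(ℤ): for all A, B ∈ SL₂(ℤ) and all (τ, z, u), one has [(φ · A) · B](τ, z, u) = [φ · (A*B)](τ, z, u). -/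
open UpperHalfPlane
open scoped MatrixGroups Real

open NormedSpace in
private lemma semiconjExpAux {𝔸 : Type*} [NormedRing 𝔸] [NormedAlgebra ℂ 𝔸] [CompleteSpace 𝔸]
    {a b c : 𝔸} (h : a * b = c * a) : a * exp b = exp c * a := by
  have hn : ∀ n : ℕ, a * b ^ n = c ^ n * a := by
    intro n
    induction n with
    | zero => simp
    | succ n ih =>
      rw [pow_succ, ← mul_assoc, ih, mul_assoc, h, ← mul_assoc, ← pow_succ]
  rw [exp_eq_tsum ℂ, ← (expSeries_summable' (𝕂 := ℂ) b).tsum_mul_left a,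
    ← (expSeries_summable' (𝕂 := ℂ) c).tsum_mul_right a]
  exact tsum_congr fun n => by rw [mul_smul_comm, hn n, smul_mul_assoc]

open NormedSpace in
private lemma expX_mul_expY {U : Type*} [NormedAddCommGroup U] [NormedSpace ℂ U]
    [CompleteSpace U] (X Y : U →L[ℂ] U) (hXY : X * Y - Y * X = Y) (s t : ℂ) :
    exp (s • X) * exp (t • Y) = exp ((Complex.exp s * t) • Y) * exp (s • X) := by
  let +nondep : NormedAlgebra ℚ (U →L[ℂ] U) := .restrictScalars ℚ ℂ _
  have h1 : X * Y = Y + Y * X := sub_eq_iff_eq_add.mp hXY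
  have hY : Y * (s • X + s • (1 : U →L[ℂ] U)) = (s • X) * Y := by
    calc Y * (s • X + s • (1 : U →L[ℂ] U)) = s • (Y * X + Y) := by
          simp [mul_add, mul_smul_comm, smul_add]
      _ = s • (X * Y) := by rw [h1, add_comm]
      _ = (s • X) * Y := (smul_mul_assoc s X Y).symm
  have hc : Commute (s • X) (s • (1 : U →L[ℂ] U)) :=
    ((Commute.one_right X).smul_left s).smul_right s
  have h1' : exp (s • (1 : U →L[ℂ] U)) = Complex.exp s • 1 := by
    rw [← Algebra.algebraMap_eq_smul_one, ← algebraMap_exp_comm, ← Complex.exp_eq_exp_ℂ,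
      Algebra.algebraMap_eq_smul_one]
  have hXYs : exp (s • X) * Y = Complex.exp s • (Y * exp (s • X)) := by
    rw [← semiconjExpAux hY, exp_add_of_commute hc, h1']
    simp [mul_smul_comm, mul_assoc]
  refine semiconjExpAux ?_
  rw [mul_smul_comm, hXYs, smul_smul, smul_mul_assoc, mul_comm]

open NormedSpace in
private lemma exp_zint_smul_eq_one {U : Type*} [NormedAddCommGroup U] [NormedSpace ℂ U]
    [CompleteSpace U] (X : U →L[ℂ] U)
    (hX : exp ((2 * (π : ℂ) * Complex.I) • X) = 1) (n : ℤ) :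
    exp (((n : ℂ) * (2 * (π : ℂ) * Complex.I)) • X) = 1 := by
  let +nondep : NormedAlgebra ℚ (U →L[ℂ] U) := .restrictScalars ℚ ℂ _
  set w : ℂ := 2 * (π : ℂ) * Complex.I with hw
  have hnat : ∀ m : ℕ, exp (((m : ℂ) * w) • X) = 1 := by
    intro m
    rw [mul_smul, Nat.cast_smul_eq_nsmul ℂ m, exp_nsmul, hX, one_pow]
  obtain ⟨m, rfl | rfl⟩ := Int.eq_nat_or_neg n
  · exact_mod_cast hnat m
  · have hcomm : Commute ((-(m : ℂ) * w) • X) (((m : ℂ) * w) • X) :=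
      ((Commute.refl X).smul_left _).smul_right _
    have := exp_add_of_commute hcomm
    rw [← add_smul] at this
    have h0 : -(m : ℂ) * w + (m : ℂ) * w = 0 := by ring
    rw [h0, zero_smul, exp_zero, hnat m, mul_one] at this
    push_cast
    exact this.symm

open NormedSpace in
private lemma op_eq_aux {U : Type*} [NormedAddCommGroup U] [NormedSpace ℂ U] [CompleteSpace U]
    (X Y : U →L[ℂ] U) (hXY : X * Y - Y * X = Y)
    (hX : exp ((2 * (π : ℂ) * Complex.I) • X) = 1)
    (j1 j2 : ℂ) (h1 : j1 ≠ 0) (h2 : j2 ≠ 0) (α β : ℂ) :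
    exp (Complex.log j2 • X) * exp (α • Y) * exp (Complex.log j1 • X) * exp (β • Y)
      = exp (Complex.log (j2 * j1) • X) * exp ((α / j1 + β) • Y) := by
  let +nondep : NormedAlgebra ℚ (U →L[ℂ] U) := .restrictScalars ℚ ℂ _
  have e1 : exp (α • Y) * exp (Complex.log j1 • X)
      = exp (Complex.log j1 • X) * exp ((α / j1) • Y) := by
    rw [expX_mul_expY X Y hXY (Complex.log j1) (α / j1), Complex.exp_log h1]
    have hα : j1 * (α / j1) = α := by field_simp
    rw [hα]
  have cXX : Commute (Complex.log j2 • X) (Complex.log j1 • X) :=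
    ((Commute.refl X).smul_left _).smul_right _
  have cYY : Commute ((α / j1) • Y) (β • Y) :=
    ((Commute.refl Y).smul_left _).smul_right _
  have hlog : exp ((Complex.log j2 + Complex.log j1) • X)
      = exp (Complex.log (j2 * j1) • X) := by
    obtain ⟨n, hn⟩ : ∃ n : ℤ, Complex.log j2 + Complex.log j1
        = Complex.log (j2 * j1) + n * (2 * π * Complex.I) := by
      rw [← Complex.exp_eq_exp_iff_exists_int, Complex.exp_add, Complex.exp_log h1,
        Complex.exp_log h2, Complex.exp_log (mul_ne_zero h2 h1)]
    rw [hn, add_smul, exp_add_of_commute (((Commute.refl X).smul_left _).smul_right _),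
      exp_zint_smul_eq_one X hX n, mul_one]
  calc exp (Complex.log j2 • X) * exp (α • Y) * exp (Complex.log j1 • X) * exp (β • Y)
      = exp (Complex.log j2 • X) * (exp (α • Y) * exp (Complex.log j1 • X))
          * exp (β • Y) := by
        rw [mul_assoc (exp (Complex.log j2 • X))]
    _ = (exp (Complex.log j2 • X) * exp (Complex.log j1 • X))
          * (exp ((α / j1) • Y) * exp (β • Y)) := by
        rw [e1]; simp only [mul_assoc]
    _ = exp ((Complex.log j2 + Complex.log j1) • X) * exp ((α / j1 + β) • Y) := by
        rw [add_smul, add_smul, exp_add_of_commute cXX, exp_add_of_commute cYY]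
    _ = _ := by rw [hlog]

private lemma denomZ_ne_zero (g : Matrix.SpecialLinearGroup (Fin 2) ℤ) (τ : ℍ) :
    ((g 1 0 : ℤ) : ℂ) * (τ : ℂ) + ((g 1 1 : ℤ) : ℂ) ≠ 0 := by
  have hne : ![((g 1 0 : ℤ) : ℝ), ((g 1 1 : ℤ) : ℝ)] ≠ 0 := by
    intro h
    have h0 : ((g 1 0 : ℤ) : ℝ) = 0 := by simpa using congr_fun h 0
    have h1 : ((g 1 1 : ℤ) : ℝ) = 0 := by simpa using congr_fun h 1
    have hg0 : (g 1 0 : ℤ) = 0 := by exact_mod_cast h0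
    have hg1 : (g 1 1 : ℤ) = 0 := by exact_mod_cast h1
    have hd := g.2
    rw [Matrix.det_fin_two] at hd
    simp only [hg0, hg1] at hd
    omega
  have h := UpperHalfPlane.linear_ne_zero (cd := ![((g 1 0 : ℤ) : ℝ), ((g 1 1 : ℤ) : ℝ)]) τ hne
  simpa using h

private lemma coef_aux (cA dA aB bB cB dB t z : ℂ) (h1 : cB*t+dB ≠ 0)
    (h2 : cA*((aB*t+bB)/(cB*t+dB)) + dA ≠ 0) (hdet : aB*dB - bB*cB = 1) :
    -(cA*(z/(cB*t+dB)))/(cA*((aB*t+bB)/(cB*t+dB))+dA)/(cB*t+dB) + -(cB*z)/(cB*t+dB)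
    = -((cA*aB+dA*cB)*z)/((cA*((aB*t+bB)/(cB*t+dB))+dA)*(cB*t+dB)) := by
  have hrep : cA*((aB*t+bB)/(cB*t+dB))+dA = (cA*(aB*t+bB)+dA*(cB*t+dB))/(cB*t+dB) := by
    rw [mul_div_assoc', div_add' _ _ _ h1]
  have h2' : cA*(aB*t+bB)+dA*(cB*t+dB) ≠ 0 := by
    intro h; apply h2; rw [hrep, h, zero_div]
  rw [hrep]
  have l1 : -(cA*(z/(cB*t+dB)))/((cA*(aB*t+bB)+dA*(cB*t+dB))/(cB*t+dB))
      = -(cA*z)/(cA*(aB*t+bB)+dA*(cB*t+dB)) := by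
    field_simp
  have l2 : ((cA*(aB*t+bB)+dA*(cB*t+dB))/(cB*t+dB))*(cB*t+dB)
      = cA*(aB*t+bB)+dA*(cB*t+dB) := div_mul_cancel₀ _ h1
  rw [l1, l2]
  rw [div_div, div_add_div _ _ (mul_ne_zero h2' h1) h1,
    div_eq_div_iff (mul_ne_zero (mul_ne_zero h2' h1) h1) h2']
  linear_combination ((cA*(aB*t+bB)+dA*(cB*t+dB))*(cB*t+dB)*cA*z) * hdet

/-- The action of Proposition 5.8:
`[φ · A](τ, z, u) = φ(A·τ, z/(cτ+d), (cτ+d)^X (exp(-(cz/(cτ+d)) • Y) u))`,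
where `(cτ+d)^X = exp(log(cτ+d) • X)` via the principal branch of log. -/
noncomputable def opSlashAction {U : Type*} [NormedAddCommGroup U] [NormedSpace ℂ U]
    [CompleteSpace U] (X Y : U →L[ℂ] U) (φ : ℍ → ℂ → U → ℂ)
    (A : Matrix.SpecialLinearGroup (Fin 2) ℤ) : ℍ → ℂ → U → ℂ :=
  fun τ z u =>
    φ (A • τ) (z / (((A 1 0 : ℤ) : ℂ) * (τ : ℂ) + ((A 1 1 : ℤ) : ℂ)))
      ((NormedSpace.exp
          (Complex.log (((A 1 0 : ℤ) : ℂ) * (τ : ℂ) + ((A 1 1 : ℤ) : ℂ)) • X))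
        ((NormedSpace.exp
            ((-(((A 1 0 : ℤ) : ℂ) * z) /
                (((A 1 0 : ℤ) : ℂ) * (τ : ℂ) + ((A 1 1 : ℤ) : ℂ))) • Y)) u))

/-- Proposition 5.8: if `X ∘ Y - Y ∘ X = Y` and `exp(2πi • X) = 1` then the
slash action `opSlashAction` is a right action of `SL₂(ℤ)` on functions
`φ : ℍ × ℂ × U → ℂ`. -/
theorem opSlashAction_right_action {U : Type*} [NormedAddCommGroup U] [NormedSpace ℂ U]
    [CompleteSpace U] (X Y : U →L[ℂ] U)
    (hXY : X * Y - Y * X = Y)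
    (hX : NormedSpace.exp (((2 * (π : ℂ) * Complex.I)) • X) = 1)
    (φ : ℍ → ℂ → U → ℂ) (A B : Matrix.SpecialLinearGroup (Fin 2) ℤ)
    (τ : ℍ) (z : ℂ) (u : U) :
    opSlashAction X Y (opSlashAction X Y φ A) B τ z u =
      opSlashAction X Y φ (A * B) τ z u := by
  have h1ne := denomZ_ne_zero B τ
  have h2ne := denomZ_ne_zero A (B • τ)
  have hBτ : ((B • τ : ℍ) : ℂ) = (((B 0 0 : ℤ) : ℂ) * τ + ((B 0 1 : ℤ) : ℂ)) /
      (((B 1 0 : ℤ) : ℂ) * τ + ((B 1 1 : ℤ) : ℂ)) := by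
    rw [UpperHalfPlane.specialLinearGroup_apply]
    simp only [UpperHalfPlane.coe_mk]
    norm_num
  have hAB0 : (((A * B) 1 0 : ℤ) : ℂ) = ((A 1 0 : ℤ) : ℂ) * ((B 0 0 : ℤ) : ℂ)
      + ((A 1 1 : ℤ) : ℂ) * ((B 1 0 : ℤ) : ℂ) := by
    have : ((A * B) 1 0 : ℤ) = A 1 0 * B 0 0 + A 1 1 * B 1 0 := by
      simp [Matrix.SpecialLinearGroup.coe_mul, Matrix.mul_apply, Fin.sum_univ_two]
    rw [this]; push_cast; ring
  have hAB1 : (((A * B) 1 1 : ℤ) : ℂ) = ((A 1 0 : ℤ) : ℂ) * ((B 0 1 : ℤ) : ℂ)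
      + ((A 1 1 : ℤ) : ℂ) * ((B 1 1 : ℤ) : ℂ) := by
    have : ((A * B) 1 1 : ℤ) = A 1 0 * B 0 1 + A 1 1 * B 1 1 := by
      simp [Matrix.SpecialLinearGroup.coe_mul, Matrix.mul_apply, Fin.sum_univ_two]
    rw [this]; push_cast; ring
  have detB : ((B 0 0 : ℤ) : ℂ) * ((B 1 1 : ℤ) : ℂ) - ((B 0 1 : ℤ) : ℂ) * ((B 1 0 : ℤ) : ℂ)
      = 1 := by
    have hd := B.2
    rw [Matrix.det_fin_two] at hd
    exact_mod_cast congrArg (Int.cast : ℤ → ℂ) hd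
  have hj3 : (((A * B) 1 0 : ℤ) : ℂ) * (τ : ℂ) + (((A * B) 1 1 : ℤ) : ℂ)
      = (((A 1 0 : ℤ) : ℂ) * ((B • τ : ℍ) : ℂ) + ((A 1 1 : ℤ) : ℂ)) *
        (((B 1 0 : ℤ) : ℂ) * (τ : ℂ) + ((B 1 1 : ℤ) : ℂ)) := by
    rw [hAB0, hAB1, hBτ]; field_simp; ring
  simp only [opSlashAction]
  rw [mul_smul]
  have harg2 : z / (((B 1 0 : ℤ) : ℂ) * (τ : ℂ) + ((B 1 1 : ℤ) : ℂ)) /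
      (((A 1 0 : ℤ) : ℂ) * ((B • τ : ℍ) : ℂ) + ((A 1 1 : ℤ) : ℂ))
      = z / ((((A * B) 1 0 : ℤ) : ℂ) * (τ : ℂ) + (((A * B) 1 1 : ℤ) : ℂ)) := by
    rw [div_div, hj3, mul_comm]
  rw [harg2]
  have hvec := congrArg (fun T : U →L[ℂ] U => T u)
    (op_eq_aux X Y hXY hX _ _ h1ne h2ne
      (-(((A 1 0 : ℤ) : ℂ) * (z / (((B 1 0 : ℤ) : ℂ) * (τ : ℂ) + ((B 1 1 : ℤ) : ℂ)))) /
        (((A 1 0 : ℤ) : ℂ) * ((B • τ : ℍ) : ℂ) + ((A 1 1 : ℤ) : ℂ)))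
      (-(((B 1 0 : ℤ) : ℂ) * z) / (((B 1 0 : ℤ) : ℂ) * (τ : ℂ) + ((B 1 1 : ℤ) : ℂ))))
  simp only [ContinuousLinearMap.mul_apply] at hvec
  rw [hvec, hj3, hAB0]
  have hcoef : -(((A 1 0 : ℤ) : ℂ) * (z / (((B 1 0 : ℤ) : ℂ) * (τ : ℂ) + ((B 1 1 : ℤ) : ℂ)))) /
        (((A 1 0 : ℤ) : ℂ) * ((B • τ : ℍ) : ℂ) + ((A 1 1 : ℤ) : ℂ)) /
        (((B 1 0 : ℤ) : ℂ) * (τ : ℂ) + ((B 1 1 : ℤ) : ℂ)) +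
        -(((B 1 0 : ℤ) : ℂ) * z) / (((B 1 0 : ℤ) : ℂ) * (τ : ℂ) + ((B 1 1 : ℤ) : ℂ))
      = -((((A 1 0 : ℤ) : ℂ) * ((B 0 0 : ℤ) : ℂ) + ((A 1 1 : ℤ) : ℂ) * ((B 1 0 : ℤ) : ℂ)) * z) /
        ((((A 1 0 : ℤ) : ℂ) * ((B • τ : ℍ) : ℂ) + ((A 1 1 : ℤ) : ℂ)) *
          (((B 1 0 : ℤ) : ℂ) * (τ : ℂ) + ((B 1 1 : ℤ) : ℂ))) := by
    rw [hBτ] at h2ne ⊢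
    exact coef_aux _ _ _ _ _ _ _ _ h1ne h2ne detB
  rw [hcoef]
end
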